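/- Let f ∈ ℤ[1/2][a₁,a₂,a₃,a₄,a₆]. Then f is invariant, i.e. φ(f) equals the image of f under the canonical inclusion, if and only if f lies in the ℤ[1/2]-subalgebra of ℤ[1/2][a₁,a₂,a₃,a₄,a₆] generated by b₂, b₄, b₆. (After inverting 2 one has b₈ = (b₂b₆ − b₄²)/4, and the ring of quasimodular forms over ℤ[1/2] is the polynomial ring ℤ[1/2][b₂,b₄,b₆].) -/

import Mathlib

open MvPolynomial

set_option maxSynthPendingDepth 3

noncomputable section

/-- `ℤ[1/2]`, the localization of `ℤ` away from `2`. -/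
abbrev Rhalf : Type := Localization.Away (2 : ℤ)

/-- `D = ℤ[1/2][a₁, a₂, a₃, a₄, a₆]`, with variables indexed `0 ↦ a₁, 1 ↦ a₂, 2 ↦ a₃,
`3 ↦ a₄, 4 ↦ a₆`. -/
abbrev D : Type := MvPolynomial (Fin 5) Rhalf

/-- `D[s, t]`, with `0 ↦ s` and `1 ↦ t`. -/
abbrev Sg : Type := MvPolynomial (Fin 2) D

def a1 : D := X 0
def a2 : D := X 1
def a3 : D := X 2
def a4 : D := X 3
def a6 : D := X 4

def b2 : D := a1 ^ 2 + 4 * a2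
def b4 : D := 2 * a4 + a1 * a3
def b6 : D := a3 ^ 2 + 4 * a6

def s : Sg := X 0
def t : Sg := X 1

/-- The right unit: the effect of the coordinate change `y ↦ y + s·x + t` on Weierstrass
coefficients, over `ℤ[1/2]`. -/
def φ : D →+* Sg :=
  (aeval ![C a1 + 2 * s,
           C a2 - s * C a1 - s ^ 2,
           C a3 + 2 * t,
           C a4 - s * C a3 - t * C a1 - 2 * s * t,
           C a6 - t * C a3 - t ^ 2] : D →ₐ[Rhalf] Sg).toRingHom




def h2 : Rhalf := IsLocalization.Away.invSelf (S := Rhalf) (2 : ℤ)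

lemma two_mul_h2 : (2 : Rhalf) * h2 = 1 := by
  have := IsLocalization.Away.mul_invSelf (S := Rhalf) (2 : ℤ)
  simpa [h2] using this

lemma hk : (2 : D) * C h2 = 1 := by
  have : (C (2 * h2) : D) = C 1 := by rw [two_mul_h2]
  rw [map_mul, map_one] at this
  exact (congrArg (· * C h2) (map_ofNat (C (σ := Fin 5) (R := Rhalf)) 2).symm).trans this

def Em : Sg →ₐ[D] D := aeval ![-(C h2) * a1, -(C h2) * a3]

lemma φ_C (r : Rhalf) : φ (C r) = C (C r) := by
  simp [φ, algebraMap_eq]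

lemma Em_C (r : D) : Em (C r) = r := by
  simp [Em]

lemma φ_b2 : φ b2 = C b2 := by
  simp [φ, b2, a1, a2, s, map_add, map_mul, map_pow, map_ofNat]
  ring

lemma φ_b4 : φ b4 = C b4 := by
  simp [φ, b4, a1, a3, a4, s, t, map_add, map_mul, map_pow, map_ofNat]
  ring

lemma φ_b6 : φ b6 = C b6 := by
  simp [φ, b6, a3, a6, t, map_add, map_mul, map_pow, map_ofNat]
  ring

lemma Emφ_X0 : Em (φ (X 0)) = 0 := by
  simp [Em, φ, a1, s]
  linear_combination (-(X 0 : D)) * hk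

lemma Emφ_X1 : Em (φ (X 1)) = C (h2 ^ 2) * b2 := by
  simp [Em, φ, b2, a1, a2, s, map_pow, map_ofNat]
  linear_combination (-(X 1 * (1 + 2 * (C h2 : D)) + X 0 ^ 2 * C h2)) * hk

lemma Emφ_X2 : Em (φ (X 2)) = 0 := by
  simp [Em, φ, a3, t]
  linear_combination (-(X 2 : D)) * hk

lemma Emφ_X3 : Em (φ (X 3)) = C h2 * b4 := by
  simp [Em, φ, b4, a1, a3, a4, s, t, map_ofNat]
  linear_combination (-(X 3 + (C h2 : D) * X 0 * X 2)) * hk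

lemma Emφ_X4 : Em (φ (X 4)) = C (h2 ^ 2) * b6 := by
  simp [Em, φ, b6, a3, a6, t, map_pow, map_ofNat]
  linear_combination (-(X 4 * (1 + 2 * (C h2 : D)) + X 2 ^ 2 * C h2)) * hk

/-- After inverting `2`, a polynomial `f ∈ ℤ[1/2][a₁, a₂, a₃, a₄, a₆]` is invariant
(i.e. `φ(f) = f`) if and only if it lies in the `ℤ[1/2]`-subalgebra generated by
`b₂, b₄, b₆`: the ring of quasimodular forms over `ℤ[1/2]` is `ℤ[1/2][b₂, b₄, b₆]`. -/
theorem invariant_iff_mem_adjoin_b_half (f : D) :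
    φ f = C f ↔ f ∈ Algebra.adjoin Rhalf ({b2, b4, b6} : Set D) := by
  constructor
  · intro hf
    have key : ∀ p : D, Em (φ p) ∈ Algebra.adjoin Rhalf ({b2, b4, b6} : Set D) := by
      intro p
      induction p using MvPolynomial.induction_on with
      | C r =>
        rw [φ_C, Em_C]
        simpa [algebraMap_eq] using Subalgebra.algebraMap_mem
          (Algebra.adjoin Rhalf ({b2, b4, b6} : Set D)) r
      | add p q hp hq =>
        rw [map_add, map_add]; exact add_mem hp hq
      | mul_X p i hp =>
        rw [map_mul, map_mul]
        refine mul_mem hp ?_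
        have hb2 : b2 ∈ Algebra.adjoin Rhalf ({b2, b4, b6} : Set D) :=
          Algebra.subset_adjoin (by simp)
        have hb4 : b4 ∈ Algebra.adjoin Rhalf ({b2, b4, b6} : Set D) :=
          Algebra.subset_adjoin (by simp)
        have hb6 : b6 ∈ Algebra.adjoin Rhalf ({b2, b4, b6} : Set D) :=
          Algebra.subset_adjoin (by simp)
        have hC : ∀ r : Rhalf, (C r : D) ∈ Algebra.adjoin Rhalf ({b2, b4, b6} : Set D) := by
          intro r
          simpa [algebraMap_eq] using
            Subalgebra.algebraMap_mem (Algebra.adjoin Rhalf ({b2, b4, b6} : Set D)) r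
        fin_cases i
        · show Em (φ (X 0)) ∈ _
          rw [Emφ_X0]; exact zero_mem _
        · show Em (φ (X 1)) ∈ _
          rw [Emφ_X1]
          exact mul_mem (hC (h2 ^ 2)) hb2
        · show Em (φ (X 2)) ∈ _
          rw [Emφ_X2]; exact zero_mem _
        · show Em (φ (X 3)) ∈ _
          rw [Emφ_X3]
          exact mul_mem (hC h2) hb4
        · show Em (φ (X 4)) ∈ _
          rw [Emφ_X4]
          exact mul_mem (hC (h2 ^ 2)) hb6
    have : f = Em (φ f) := by rw [hf, Em_C]
    rw [this]; exact key f
  · intro hf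
    induction hf using Algebra.adjoin_induction with
    | mem x hx =>
      rcases hx with h | h | h
      · rw [h]; exact φ_b2
      · rw [h]; exact φ_b4
      · rw [h]; exact φ_b6
    | algebraMap r => simpa [algebraMap_eq] using φ_C r
    | add x y _ _ hx hy => rw [map_add, map_add, hx, hy]
    | mul x y _ _ hx hy => rw [map_mul, map_mul, hx, hy]
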